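/- Let ν₁, ν₂ ∈ S^{n-1} and e ∈ S^{n-1} with ν_i·e > 0 for i=1,2, and define ν_i' as the unit vector obtained by projecting ν_i onto the hyperplane e^⊥ and normalizing (assuming ν_i ≠ e). If ν₁·ν₂ ≤ 0, then ν₁'·ν₂' < 0. -/
import Mathlib


open scoped RealInnerProductSpace

lemma proj_ne_zero (n : ℕ) (ν e : EuclideanSpace ℝ (Fin n))
    (h1 : ‖ν‖ = 1) (he : ‖e‖ = 1) (hd : 0 < ⟪ν, e⟫) (hne : ν ≠ e) :
    ν - ⟪ν, e⟫ • e ≠ 0 := by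
  intro h
  have hv : ν = ⟪ν, e⟫ • e := sub_eq_zero.mp h
  have hn : ‖(⟪ν, e⟫ : ℝ) • e‖ = 1 := by rw [← hv]; exact h1
  rw [norm_smul, he, mul_one, Real.norm_eq_abs, abs_of_pos hd] at hn
  exact hne (by rw [hv, hn, one_smul])

/-- If `ν₁, ν₂, e` are unit vectors with `νᵢ·e > 0`, `νᵢ ≠ e`, and `ν₁·ν₂ ≤ 0`, then the
normalized projections `νᵢ' = (νᵢ - (νᵢ·e)e)/|νᵢ - (νᵢ·e)e|` onto `e^⊥` satisfy
`ν₁'·ν₂' < 0`. -/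
theorem stmt18 (n : ℕ) (ν₁ ν₂ e : EuclideanSpace ℝ (Fin n))
    (h1 : ‖ν₁‖ = 1) (h2 : ‖ν₂‖ = 1) (he : ‖e‖ = 1)
    (hd1 : 0 < ⟪ν₁, e⟫) (hd2 : 0 < ⟪ν₂, e⟫)
    (hne1 : ν₁ ≠ e) (hne2 : ν₂ ≠ e)
    (hobt : ⟪ν₁, ν₂⟫ ≤ 0) :
    ⟪‖ν₁ - ⟪ν₁, e⟫ • e‖⁻¹ • (ν₁ - ⟪ν₁, e⟫ • e),
      ‖ν₂ - ⟪ν₂, e⟫ • e‖⁻¹ • (ν₂ - ⟪ν₂, e⟫ • e)⟫ < 0 := by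
  have hz1 := proj_ne_zero n ν₁ e h1 he hd1 hne1
  have hz2 := proj_ne_zero n ν₂ e h2 he hd2 hne2
  have hp1 : (0:ℝ) < ‖ν₁ - ⟪ν₁, e⟫ • e‖⁻¹ := inv_pos.mpr (norm_pos_iff.mpr hz1)
  have hp2 : (0:ℝ) < ‖ν₂ - ⟪ν₂, e⟫ • e‖⁻¹ := inv_pos.mpr (norm_pos_iff.mpr hz2)
  rw [real_inner_smul_left, real_inner_smul_right]
  have key : ⟪ν₁ - ⟪ν₁, e⟫ • e, ν₂ - ⟪ν₂, e⟫ • e⟫ < 0 := by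
    have hee : ⟪e, e⟫ = (1:ℝ) := by
      rw [real_inner_self_eq_norm_sq, he]; norm_num
    simp only [inner_sub_left, inner_sub_right, real_inner_smul_left,
      real_inner_smul_right, hee]
    have hsym : ⟪e, ν₂⟫ = ⟪ν₂, e⟫ := real_inner_comm ν₂ e
    nlinarith [mul_pos hd1 hd2]
  nlinarith [mul_pos hp1 hp2]
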